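/- Fix n ≥ 1, ℏ > 0, a symmetric K ∈ M_n(ℂ) and a skew-symmetric J ∈ M_n(ℂ), and set Λ = K + J. For every a, b ∈ ℂⁿ, the Λ-product series of E(a) and E(b) converges absolutely at every point u ∈ ℂⁿ, and E(a) *_Λ E(b) = exp((1/(2iℏ))·aJbᵀ)·E(a+b). In particular the functions E(a) satisfy the Heisenberg-group relation E(a) *_Λ E(b) = exp((1/(iℏ))·aJbᵀ)·E(b) *_Λ E(a). -/

import Mathlib

open Matrix

/-- Partial derivative `∂_{u_i}` of a function on `ℂⁿ`. -/
noncomputable def pd (n : ℕ) (i : Fin n) (f : (Fin n → ℂ) → ℂ) : (Fin n → ℂ) → ℂ :=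
  fun u => fderiv ℂ f u (Pi.single i 1)

/-- Iterated partial derivatives along a list of indices. -/
noncomputable def iterPd (n : ℕ) (l : List (Fin n)) (f : (Fin n → ℂ) → ℂ) :
    (Fin n → ℂ) → ℂ :=
  l.foldr (pd n) f

/-- The `k`-th term of the `Λ`-product series of `f` and `g` at the point `u`. -/
noncomputable def starTerm (ℏ : ℝ) (n : ℕ) (Λ : Matrix (Fin n) (Fin n) ℂ)
    (f g : (Fin n → ℂ) → ℂ) (u : Fin n → ℂ) (k : ℕ) : ℂ :=
  ((Complex.I * ℏ) ^ k / ((k.factorial : ℂ) * 2 ^ k)) *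
    ∑ i : Fin k → Fin n, ∑ j : Fin k → Fin n,
      (∏ t, Λ (i t) (j t)) *
        (iterPd n (List.ofFn i) f u * iterPd n (List.ofFn j) g u)

/-- The `K`-ordered expression of the star-exponential `e_*^{(1/(iℏ))⟨a,u⟩}`:
`E(a)(u) = exp((1/(4iℏ))·aKaᵀ + (1/(iℏ))·a·uᵀ)`. -/
noncomputable def Efun (ℏ : ℝ) (n : ℕ) (K : Matrix (Fin n) (Fin n) ℂ)
    (a : Fin n → ℂ) : (Fin n → ℂ) → ℂ :=
  fun u => Complex.exp ((1 / (4 * (Complex.I * ℏ))) * (∑ i, ∑ j, a i * K i j * a j) +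
    (1 / (Complex.I * ℏ)) * ∑ i, a i * u i)

lemma pd_const_mul_exp (n : ℕ) (r C : ℂ) (c : Fin n → ℂ) (i : Fin n) :
    pd n i (fun u => r * Complex.exp (C + ∑ j, c j * u j)) =
      fun u => r * (c i * Complex.exp (C + ∑ j, c j * u j)) := by
  funext u
  have hL : HasFDerivAt (fun u : Fin n → ℂ => C + ∑ j, c j * u j)
      (∑ j, c j • (ContinuousLinearMap.proj j : (Fin n → ℂ) →L[ℂ] ℂ)) u := by
    apply HasFDerivAt.const_add
    have : HasFDerivAt (fun u : Fin n → ℂ => ∑ j, c j * u j)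
        (∑ j, c j • (ContinuousLinearMap.proj j : (Fin n → ℂ) →L[ℂ] ℂ)) u := by
      apply HasFDerivAt.fun_sum
      intro j _
      exact ((ContinuousLinearMap.proj j : (Fin n → ℂ) →L[ℂ] ℂ).hasFDerivAt (x := u)).const_mul (c j)
    exact this
  have h2 : HasFDerivAt (fun u : Fin n → ℂ => r * Complex.exp (C + ∑ j, c j * u j))
      (r • (Complex.exp (C + ∑ j, c j * u j) •
        ∑ j, c j • (ContinuousLinearMap.proj j : (Fin n → ℂ) →L[ℂ] ℂ))) u :=
    (hL.cexp).const_mul r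
  rw [pd, h2.fderiv]
  simp [ContinuousLinearMap.sum_apply, Finset.mul_sum, Pi.single_apply, mul_comm, mul_assoc,
    Finset.sum_ite_eq]

lemma iterPd_exp (n : ℕ) (C : ℂ) (c : Fin n → ℂ) (l : List (Fin n)) :
    iterPd n l (fun u => Complex.exp (C + ∑ j, c j * u j)) =
      fun u => (l.map c).prod * Complex.exp (C + ∑ j, c j * u j) := by
  induction l with
  | nil => simp [iterPd]
  | cons i l ih =>
    have : iterPd n (i :: l) (fun u => Complex.exp (C + ∑ j, c j * u j)) =
        pd n i (iterPd n l (fun u => Complex.exp (C + ∑ j, c j * u j))) := rfl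
    rw [this, ih, pd_const_mul_exp]
    funext u
    simp
    ring

lemma double_fun_sum (k n : ℕ) (F : Fin n → Fin n → ℂ) :
    ∑ i : Fin k → Fin n, ∑ j : Fin k → Fin n, ∏ t, F (i t) (j t)
      = (∑ p, ∑ q, F p q) ^ k := by
  have h1 : (∑ p, ∑ q, F p q) = ∑ x : Fin n × Fin n, F x.1 x.2 := by
    rw [Fintype.sum_prod_type]
  have h2 : ∑ i : Fin k → Fin n, ∑ j : Fin k → Fin n, ∏ t, F (i t) (j t)
      = ∑ x : (Fin k → Fin n) × (Fin k → Fin n), ∏ t, F (x.1 t) (x.2 t) := by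
    rw [Fintype.sum_prod_type]
  rw [h1, h2, Fintype.sum_pow]
  exact (Fintype.sum_equiv (Equiv.arrowProdEquivProdArrow (Fin k) (fun _ => Fin n) (fun _ => Fin n))
    (fun p => ∏ t, F (p t).1 (p t).2)
    (fun x => ∏ t, F (x.1 t) (x.2 t)) (fun p => rfl)).symm

lemma Efun_eq (ℏ : ℝ) (n : ℕ) (K : Matrix (Fin n) (Fin n) ℂ) (a : Fin n → ℂ) :
    Efun ℏ n K a = fun u => Complex.exp
      ((1 / (4 * (Complex.I * ℏ))) * (∑ i, ∑ j, a i * K i j * a j) +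
        ∑ j, (a j * (1 / (Complex.I * ℏ))) * u j) := by
  funext u
  unfold Efun
  have h : (1 / (Complex.I * (ℏ:ℂ))) * ∑ i, a i * u i
      = ∑ j, (a j * (1 / (Complex.I * ℏ))) * u j := by
    rw [Finset.mul_sum]
    exact Finset.sum_congr rfl (fun j _ => by ring)
  rw [h]

lemma starTerm_Efun (ℏ : ℝ) (hℏ : 0 < ℏ) (n : ℕ) (Λ K : Matrix (Fin n) (Fin n) ℂ)
    (a b : Fin n → ℂ) (u : Fin n → ℂ) (k : ℕ) :
    starTerm ℏ n Λ (Efun ℏ n K a) (Efun ℏ n K b) u k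
      = (((1 / (2 * (Complex.I * ℏ))) * ∑ p, ∑ q, a p * Λ p q * b q) ^ k
          / (k.factorial : ℂ)) * (Efun ℏ n K a u * Efun ℏ n K b u) := by
  have hx : (Complex.I * ℏ : ℂ) ≠ 0 := by
    simp [Complex.I_ne_zero, Complex.ofReal_ne_zero, ne_of_gt hℏ]
  set w : ℂ := 1 / (Complex.I * ℏ) with hw
  have key : ∀ (c : Fin n → ℂ) (i : Fin k → Fin n),
      iterPd n (List.ofFn i) (Efun ℏ n K c) u = (∏ t, c (i t) * w) * Efun ℏ n K c u := by
    intro c i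
    rw [Efun_eq ℏ n K c, iterPd_exp]
    simp only [List.map_ofFn, List.prod_ofFn, Function.comp]
    rw [hw]
  unfold starTerm
  have hsum : ∑ i : Fin k → Fin n, ∑ j : Fin k → Fin n,
      (∏ t, Λ (i t) (j t)) *
        (iterPd n (List.ofFn i) (Efun ℏ n K a) u * iterPd n (List.ofFn j) (Efun ℏ n K b) u)
      = (Efun ℏ n K a u * Efun ℏ n K b u) *
          ∑ i : Fin k → Fin n, ∑ j : Fin k → Fin n, ∏ t, Λ (i t) (j t) * (a (i t) * w) * (b (j t) * w) := by
    rw [Finset.mul_sum]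
    refine Finset.sum_congr rfl (fun i _ => ?_)
    rw [Finset.mul_sum]
    refine Finset.sum_congr rfl (fun j _ => ?_)
    rw [key a i, key b j]
    rw [show (∏ t, Λ (i t) (j t) * (a (i t) * w) * (b (j t) * w))
        = (∏ t, Λ (i t) (j t)) * (∏ t, a (i t) * w) * (∏ t, b (j t) * w) by
      rw [← Finset.prod_mul_distrib, ← Finset.prod_mul_distrib]]
    ring
  rw [hsum, double_fun_sum k n (fun p q => Λ p q * (a p * w) * (b q * w))]
  have hS : (∑ p, ∑ q, Λ p q * (a p * w) * (b q * w))
      = (w * w) * ∑ p, ∑ q, a p * Λ p q * b q := by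
    rw [Finset.mul_sum]
    refine Finset.sum_congr rfl (fun p _ => ?_)
    rw [Finset.mul_sum]
    exact Finset.sum_congr rfl (fun q _ => by ring)
  rw [hS]
  have hcoef : (Complex.I * ℏ) ^ k / ((k.factorial : ℂ) * 2 ^ k)
        * ((w * w) * ∑ p, ∑ q, a p * Λ p q * b q) ^ k
      = ((1 / (2 * (Complex.I * ℏ))) * ∑ p, ∑ q, a p * Λ p q * b q) ^ k / (k.factorial : ℂ) := by
    have h1 : (Complex.I * (ℏ:ℂ)) * (w * w) / 2 = 1 / (2 * (Complex.I * ℏ)) := by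
      rw [hw]; field_simp
    have h2 : (Complex.I * (ℏ:ℂ))^k / ((k.factorial : ℂ) * 2^k)
          * ((w*w) * ∑ p, ∑ q, a p * Λ p q * b q)^k
        = ((Complex.I*(ℏ:ℂ)) * (w*w) / 2)^k * (∑ p, ∑ q, a p * Λ p q * b q)^k
            / (k.factorial : ℂ) := by
      rw [mul_pow, mul_pow, div_pow]; ring
    rw [h2, h1, ← mul_pow]
  rw [← hcoef]
  ring

lemma expArg_identity (ℏ : ℝ) (hℏ : 0 < ℏ) (n : ℕ)
    (K J : Matrix (Fin n) (Fin n) ℂ) (hK : Kᵀ = K)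
    (a b u : Fin n → ℂ) :
    Complex.exp ((1 / (2 * (Complex.I * ℏ))) * ∑ p, ∑ q, a p * (K + J) p q * b q) *
      (Efun ℏ n K a u * Efun ℏ n K b u)
    = Complex.exp ((1 / (2 * (Complex.I * ℏ))) * ∑ i, ∑ j, a i * J i j * b j) *
        Efun ℏ n K (a + b) u := by
  have hx : (Complex.I * ℏ : ℂ) ≠ 0 := by
    simp [Complex.I_ne_zero, Complex.ofReal_ne_zero, ne_of_gt hℏ]
  have hKsym : ∀ p q, K q p = K p q := by
    intro p q
    have := congrFun (congrFun hK p) q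
    rw [Matrix.transpose_apply] at this
    exact this
  have hba : ∑ i, ∑ j, b i * K i j * a j = ∑ i, ∑ j, a i * K i j * b j := by
    rw [Finset.sum_comm]
    refine Finset.sum_congr rfl fun p _ => Finset.sum_congr rfl fun q _ => ?_
    rw [hKsym q p]; ring
  have hA1 : ∑ p, ∑ q, a p * (K + J) p q * b q
      = (∑ p, ∑ q, a p * K p q * b q) + ∑ p, ∑ q, a p * J p q * b q := by
    rw [← Finset.sum_add_distrib]
    refine Finset.sum_congr rfl fun p _ => ?_
    rw [← Finset.sum_add_distrib]
    refine Finset.sum_congr rfl fun q _ => ?_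
    simp [Matrix.add_apply]; ring
  have hA2 : ∑ i, ∑ j, (a + b) i * K i j * (a + b) j
      = (∑ i, ∑ j, a i * K i j * a j) + (∑ i, ∑ j, b i * K i j * b j)
        + 2 * ∑ i, ∑ j, a i * K i j * b j := by
    have hterm : ∀ i j, (a + b) i * K i j * (a + b) j
        = a i * K i j * a j + a i * K i j * b j + b i * K i j * a j + b i * K i j * b j := by
      intro i j; simp [Pi.add_apply]; ring
    simp only [hterm, Finset.sum_add_distrib]
    rw [hba]; ring
  have hA3 : ∑ i, (a + b) i * u i = (∑ i, a i * u i) + ∑ i, b i * u i := by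
    rw [← Finset.sum_add_distrib]
    exact Finset.sum_congr rfl fun i _ => by simp [Pi.add_apply]; ring
  unfold Efun
  simp only [← Complex.exp_add]
  congr 1
  rw [hA1, hA2, hA3]
  field_simp
  ring

lemma mainHasSum (ℏ : ℝ) (hℏ : 0 < ℏ) (n : ℕ)
    (K J : Matrix (Fin n) (Fin n) ℂ) (hK : Kᵀ = K)
    (a b u : Fin n → ℂ) :
    HasSum (starTerm ℏ n (K + J) (Efun ℏ n K a) (Efun ℏ n K b) u)
      (Complex.exp ((1 / (2 * (Complex.I * ℏ))) * ∑ i, ∑ j, a i * J i j * b j) *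
        Efun ℏ n K (a + b) u) := by
  have hexp : HasSum
      (fun k : ℕ => ((1 / (2 * (Complex.I * ℏ))) * ∑ p, ∑ q, a p * (K + J) p q * b q) ^ k
        / (k.factorial : ℂ))
      (Complex.exp ((1 / (2 * (Complex.I * ℏ))) * ∑ p, ∑ q, a p * (K + J) p q * b q)) := by
    rw [Complex.exp_eq_exp_ℂ]
    exact NormedSpace.expSeries_div_hasSum_exp (𝔸 := ℂ)
      ((1 / (2 * (Complex.I * ℏ))) * ∑ p, ∑ q, a p * (K + J) p q * b q)
  have h := hexp.mul_right (Efun ℏ n K a u * Efun ℏ n K b u)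
  rw [expArg_identity ℏ hℏ n K J hK a b u] at h
  refine HasSum.congr_fun h fun k => ?_
  exact starTerm_Efun ℏ hℏ n (K + J) K a b u k

theorem statement15 (n : ℕ) (hn : 1 ≤ n) (ℏ : ℝ) (hℏ : 0 < ℏ)
    (K J : Matrix (Fin n) (Fin n) ℂ) (hK : Kᵀ = K) (hJ : Jᵀ = -J) :
    ∀ a b u : Fin n → ℂ,
      -- the Λ-product series converges absolutely at every point
      Summable (fun k => ‖starTerm ℏ n (K + J) (Efun ℏ n K a) (Efun ℏ n K b) u k‖) ∧
      -- and E(a) *_Λ E(b) = exp((1/(2iℏ))·aJbᵀ)·E(a+b)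
      HasSum (starTerm ℏ n (K + J) (Efun ℏ n K a) (Efun ℏ n K b) u)
        (Complex.exp ((1 / (2 * (Complex.I * ℏ))) * ∑ i, ∑ j, a i * J i j * b j) *
          Efun ℏ n K (a + b) u) ∧
      -- Heisenberg relation
      (∑' k, starTerm ℏ n (K + J) (Efun ℏ n K a) (Efun ℏ n K b) u k
        = Complex.exp ((1 / (Complex.I * ℏ)) * ∑ i, ∑ j, a i * J i j * b j) *
          ∑' k, starTerm ℏ n (K + J) (Efun ℏ n K b) (Efun ℏ n K a) u k) := by
  intro a b u
  have hx : (Complex.I * ℏ : ℂ) ≠ 0 := by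
    simp [Complex.I_ne_zero, Complex.ofReal_ne_zero, ne_of_gt hℏ]
  refine ⟨?_, mainHasSum ℏ hℏ n K J hK a b u, ?_⟩
  · -- summability of norms
    have heq : (fun k => ‖starTerm ℏ n (K + J) (Efun ℏ n K a) (Efun ℏ n K b) u k‖)
        = fun k => (‖(1 / (2 * (Complex.I * ℏ))) * ∑ p, ∑ q, a p * (K + J) p q * b q‖ ^ k
            / (k.factorial : ℝ)) * ‖Efun ℏ n K a u * Efun ℏ n K b u‖ := by
      funext k
      rw [starTerm_Efun ℏ hℏ n (K + J) K a b u k]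
      simp [norm_mul, norm_div, norm_pow]
    rw [heq]
    exact (Real.summable_pow_div_factorial _).mul_right _
  · -- Heisenberg
    rw [(mainHasSum ℏ hℏ n K J hK a b u).tsum_eq,
      (mainHasSum ℏ hℏ n K J hK b a u).tsum_eq]
    have hJba : ∑ i, ∑ j, b i * J i j * a j = -∑ i, ∑ j, a i * J i j * b j := by
      rw [← Finset.sum_neg_distrib, Finset.sum_comm]
      refine Finset.sum_congr rfl fun p _ => ?_
      rw [← Finset.sum_neg_distrib]
      refine Finset.sum_congr rfl fun q _ => ?_
      have := congrFun (congrFun hJ p) q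
      rw [Matrix.transpose_apply, Matrix.neg_apply] at this
      rw [this]; ring
    rw [hJba, show b + a = a + b from add_comm b a]
    rw [← mul_assoc (Complex.exp _) (Complex.exp _), ← Complex.exp_add]
    congr 2
    field_simp
    ring
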